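/- Let m ≥ 1, let γ be a Schwartz function on ℝ^m × ℝ and σ a Schwartz function on ℝ. Then for every x ∈ ℝ^m, the integral representation S[γ](x) := ∫_{ℝ^m×ℝ} γ(a,b)·σ(a·x − b) da db admits the Fourier expression S[γ](x) = (2π)^{−1} ∫_{ℝ^m×ℝ} γ^♯(a,ω)·σ^♯(ω)·e^{iω a·x} da dω, where both integrals converge absolutely. -/

import Mathlib

open MeasureTheory Complex
open scoped RealInnerProductSpace

/-- Fourier transform in the bias variable: `φ^♯(ω) = ∫ φ(b) e^{-iωb} db`. -/
noncomputable def biasFourier (φ : ℝ → ℂ) (ω : ℝ) : ℂ :=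
  ∫ b : ℝ, φ b * Complex.exp (-Complex.I * ω * b)

/-- Fourier transform of `γ(a,b)` in the bias variable `b`. -/
noncomputable def gammaSharp (m : ℕ) (γ : EuclideanSpace ℝ (Fin m) × ℝ → ℂ)
    (a : EuclideanSpace ℝ (Fin m)) (ω : ℝ) : ℂ :=
  ∫ b : ℝ, γ (a, b) * Complex.exp (-Complex.I * ω * b)

namespace IntRepAux

open scoped FourierTransform Real

lemma biasFourier_eq (φ : ℝ → ℂ) (ω : ℝ) :
    biasFourier φ ω = 𝓕 φ (ω / (2 * π)) := by
  rw [Real.fourier_eq']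
  unfold biasFourier
  congr 1 with b
  rw [smul_eq_mul, mul_comm]
  congr 1
  have hπ : (π : ℝ) ≠ 0 := Real.pi_ne_zero
  have h0 : ⟪b, ω / (2 * π)⟫ = b * (ω / (2 * π)) := by simp [RCLike.inner_apply]; ring
  rw [h0]
  have hπc : (π : ℂ) ≠ 0 := by exact_mod_cast hπ
  push_cast
  have h1 : (-2 : ℂ) * π * (b * (ω / (2 * π))) = -(ω * b) := by
    field_simp
  rw [h1]
  ring

lemma sigma_inversion (σ : SchwartzMap ℝ ℂ) (s : ℝ) :
    ∫ ω : ℝ, biasFourier (⇑σ) ω * Complex.exp (Complex.I * ω * s) = 2 * π * σ s := by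
  have hπ : (2 * π : ℝ) ≠ 0 := by positivity
  set g : ℝ → ℂ := fun ξ => 𝓕 (⇑σ) ξ * Complex.exp (Complex.I * (2 * π * ξ) * s) with hg
  have h1 : ∀ ω : ℝ, biasFourier (⇑σ) ω * Complex.exp (Complex.I * ω * s)
      = g ((2 * π)⁻¹ * ω) := by
    intro ω
    simp only [hg, biasFourier_eq]
    rw [show ((2 * π)⁻¹ * ω) = ω / (2 * π) by ring]
    congr 2
    have hc : (2 * (π:ℂ)) ≠ 0 := by
      simp [Real.pi_ne_zero, Complex.ofReal_ne_zero]
    push_cast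
    field_simp
  have h2 : (∫ ω : ℝ, biasFourier (⇑σ) ω * Complex.exp (Complex.I * ω * s))
      = |((2 * π : ℝ))⁻¹⁻¹| • ∫ ξ, g ξ := by
    simp_rw [h1]
    exact MeasureTheory.Measure.integral_comp_mul_left g ((2 * π)⁻¹)
  rw [h2]
  have h3 : ∫ ξ, g ξ = 𝓕⁻ (𝓕 ⇑σ) s := by
    rw [Real.fourierInv_eq']
    congr 1 with ξ
    rw [smul_eq_mul, mul_comm]
    simp only [hg]
    congr 1
    have h0 : ⟪ξ, s⟫ = ξ * s := by simp [RCLike.inner_apply]; ring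
    rw [h0]
    push_cast
    ring
  have h4 : 𝓕⁻ (𝓕 ⇑σ) = ⇑σ := by
    apply σ.continuous.fourierInv_fourier_eq σ.integrable
    rw [← SchwartzMap.fourier_coe, ← SchwartzMap.fourierTransformCLM_apply ℂ]
    exact SchwartzMap.integrable _
  rw [h3, h4, inv_inv, abs_of_pos (by positivity : (0:ℝ) < 2 * π)]
  rw [real_smul]
  push_cast
  ring

lemma biasFourier_continuous (σ : SchwartzMap ℝ ℂ) : Continuous (biasFourier ⇑σ) := by
  have h : biasFourier ⇑σ = fun ω => 𝓕 (⇑σ) (ω / (2 * π)) := funext (biasFourier_eq ⇑σ)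
  rw [h, ← SchwartzMap.fourier_coe, ← SchwartzMap.fourierTransformCLM_apply ℂ]
  exact (SchwartzMap.fourierTransformCLM ℂ σ).continuous.comp (continuous_id.div_const _)

lemma biasFourier_integrable (σ : SchwartzMap ℝ ℂ) : Integrable (biasFourier ⇑σ) := by
  have h : biasFourier ⇑σ = fun ω => 𝓕 (⇑σ) ((2 * π)⁻¹ * ω) := by
    funext ω
    rw [biasFourier_eq]
    congr 1
    ring
  rw [h]
  apply MeasureTheory.Integrable.comp_mul_left' _ (by positivity : ((2*π:ℝ))⁻¹ ≠ 0)
  rw [← SchwartzMap.fourier_coe, ← SchwartzMap.fourierTransformCLM_apply ℂ]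
  exact SchwartzMap.integrable _

variable {m : ℕ}

instance euclProdHaar (m : ℕ) :
    ((volume : Measure (EuclideanSpace ℝ (Fin m) × ℝ))).IsAddHaarMeasure :=
  inferInstanceAs
    (((volume : Measure (EuclideanSpace ℝ (Fin m))).prod (volume : Measure ℝ)).IsAddHaarMeasure)

lemma slice_integrable (γ : SchwartzMap (EuclideanSpace ℝ (Fin m) × ℝ) ℂ)
    (a : EuclideanSpace ℝ (Fin m)) : Integrable (fun b : ℝ => γ (a, b)) := by
  obtain ⟨M, hM0, hM⟩ := γ.decay 0 0
  obtain ⟨C, hC0, hC⟩ := γ.decay 2 0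
  have key : ∀ b : ℝ, ‖γ (a, b)‖ ≤ (M + C) * (1 + b ^ 2)⁻¹ := by
    intro b
    have hpos : (0:ℝ) < 1 + b ^ 2 := by positivity
    have h1 : ‖γ (a, b)‖ ≤ M := by
      simpa [norm_iteratedFDeriv_zero] using hM (a, b)
    have h2 : b ^ 2 * ‖γ (a, b)‖ ≤ C := by
      have h := hC (a, b)
      rw [norm_iteratedFDeriv_zero] at h
      refine le_trans ?_ h
      have hb : |b| ≤ ‖(a, b)‖ := by simpa using norm_snd_le (a, b)
      have hb2 : b ^ 2 ≤ ‖(a, b)‖ ^ 2 := by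
        rw [← _root_.sq_abs]; exact pow_le_pow_left₀ (abs_nonneg b) hb 2
      exact mul_le_mul_of_nonneg_right hb2 (norm_nonneg _)
    calc ‖γ (a, b)‖ = ((1 + b ^ 2) * ‖γ (a, b)‖) * (1 + b ^ 2)⁻¹ := by field_simp
      _ ≤ (M + C) * (1 + b ^ 2)⁻¹ := by
          apply mul_le_mul_of_nonneg_right _ (by positivity)
          rw [add_mul, one_mul]
          exact add_le_add h1 h2
  apply (integrable_inv_one_add_sq.const_mul (M + C)).mono'
    (γ.continuous.comp (Continuous.prodMk_right a)).aestronglyMeasurable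
  filter_upwards with b
  simpa using key b

lemma norm_exp_I_mul (ω : ℝ) (z : ℂ) (hz : z.im = 0) :
    ‖Complex.exp (Complex.I * ω * z)‖ = 1 := by
  rw [Complex.norm_exp]
  simp [Complex.mul_re, Complex.mul_im, hz]

/-- Pointwise rewriting of the ω-integrand as a b-integral. -/
lemma inner_rewrite (γ : SchwartzMap (EuclideanSpace ℝ (Fin m) × ℝ) ℂ) (σ : SchwartzMap ℝ ℂ)
    (a : EuclideanSpace ℝ (Fin m)) (ω t : ℝ) :
    gammaSharp m (⇑γ) a ω * biasFourier (⇑σ) ω * Complex.exp (Complex.I * ω * t)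
      = ∫ b : ℝ, γ (a, b) * biasFourier (⇑σ) ω
          * Complex.exp (Complex.I * ω * ((t : ℂ) - (b : ℂ))) := by
  unfold gammaSharp
  rw [mul_assoc, ← MeasureTheory.integral_mul_const]
  congr 1 with b
  have he : Complex.exp (-Complex.I * ω * b) * Complex.exp (Complex.I * ω * t)
      = Complex.exp (Complex.I * ω * ((t : ℂ) - (b : ℂ))) := by
    rw [← Complex.exp_add]
    congr 1
    push_cast
    ring
  rw [← he]
  ring

lemma F_integrable (γ : SchwartzMap (EuclideanSpace ℝ (Fin m) × ℝ) ℂ) (σ : SchwartzMap ℝ ℂ)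
    (a : EuclideanSpace ℝ (Fin m)) (t : ℝ) :
    Integrable (fun q : ℝ × ℝ => γ (a, q.2) * biasFourier (⇑σ) q.1
        * Complex.exp (Complex.I * q.1 * ((t : ℂ) - (q.2 : ℂ))))
      ((volume : Measure ℝ).prod volume) := by
  have hprod : Integrable (fun q : ℝ × ℝ => biasFourier (⇑σ) q.1 * γ (a, q.2))
      ((volume : Measure ℝ).prod volume) :=
    (biasFourier_integrable σ).mul_prod (slice_integrable γ a)
  apply hprod.mono
  · apply Continuous.aestronglyMeasurable
    apply Continuous.mul
    · exact Continuous.mul (γ.continuous.comp (continuous_const.prodMk continuous_snd))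
        ((biasFourier_continuous σ).comp continuous_fst)
    · exact Complex.continuous_exp.comp (by continuity)
  · filter_upwards with q
    rw [norm_mul, norm_mul, norm_mul, norm_exp_I_mul]
    · rw [mul_one, mul_comm]
    · simp

/-- The key per-slice identity. -/
lemma key (γ : SchwartzMap (EuclideanSpace ℝ (Fin m) × ℝ) ℂ) (σ : SchwartzMap ℝ ℂ)
    (a : EuclideanSpace ℝ (Fin m)) (t : ℝ) :
    (∫ b : ℝ, γ (a, b) * σ (t - b))
      = (2 * (π : ℂ))⁻¹ * ∫ ω : ℝ, gammaSharp m (⇑γ) a ω * biasFourier (⇑σ) ω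
          * Complex.exp (Complex.I * ω * t) := by
  have hπ : (2 * (π : ℂ)) ≠ 0 := by
    simp [Real.pi_ne_zero, Complex.ofReal_ne_zero]
  have h1 : (∫ ω : ℝ, gammaSharp m (⇑γ) a ω * biasFourier (⇑σ) ω
        * Complex.exp (Complex.I * ω * t))
      = ∫ ω : ℝ, ∫ b : ℝ, γ (a, b) * biasFourier (⇑σ) ω
          * Complex.exp (Complex.I * ω * ((t : ℂ) - (b : ℂ))) := by
    congr 1 with ω
    exact inner_rewrite γ σ a ω t
  have h2 : (∫ ω : ℝ, ∫ b : ℝ, γ (a, b) * biasFourier (⇑σ) ω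
        * Complex.exp (Complex.I * ω * ((t : ℂ) - (b : ℂ))))
      = ∫ b : ℝ, ∫ ω : ℝ, γ (a, b) * biasFourier (⇑σ) ω
          * Complex.exp (Complex.I * ω * ((t : ℂ) - (b : ℂ))) := by
    apply MeasureTheory.integral_integral_swap
    exact F_integrable γ σ a t
  have h3 : ∀ b : ℝ, (∫ ω : ℝ, γ (a, b) * biasFourier (⇑σ) ω
        * Complex.exp (Complex.I * ω * ((t : ℂ) - (b : ℂ))))
      = 2 * (π : ℂ) * (γ (a, b) * σ (t - b)) := by
    intro b
    have e1 : ∀ ω : ℝ, γ (a, b) * biasFourier (⇑σ) ω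
        * Complex.exp (Complex.I * ω * ((t : ℂ) - (b : ℂ)))
        = γ (a, b) * (biasFourier (⇑σ) ω * Complex.exp (Complex.I * ω * ((t - b : ℝ) : ℂ))) := by
      intro ω
      rw [mul_assoc]
      congr 2
      push_cast
      ring
    simp_rw [e1]
    rw [MeasureTheory.integral_const_mul, sigma_inversion σ (t - b)]
    ring
  rw [h1, h2]
  simp_rw [h3]
  rw [MeasureTheory.integral_const_mul, ← mul_assoc, inv_mul_cancel₀ hπ, one_mul]

end IntRepAux

open IntRepAux

theorem integral_representation_fourier_expression (m : ℕ) (hm : 1 ≤ m)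
    (γ : SchwartzMap (EuclideanSpace ℝ (Fin m) × ℝ) ℂ) (σ : SchwartzMap ℝ ℂ)
    (x : EuclideanSpace ℝ (Fin m)) :
    Integrable (fun p : EuclideanSpace ℝ (Fin m) × ℝ => γ p * σ (⟪p.1, x⟫ - p.2)) ∧
    Integrable (fun p : EuclideanSpace ℝ (Fin m) × ℝ =>
        gammaSharp m γ p.1 p.2 * biasFourier σ p.2 * Complex.exp (Complex.I * p.2 * ⟪p.1, x⟫)) ∧
    (∫ p : EuclideanSpace ℝ (Fin m) × ℝ, γ p * σ (⟪p.1, x⟫ - p.2))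
      = (2 * (Real.pi : ℂ))⁻¹
          * ∫ p : EuclideanSpace ℝ (Fin m) × ℝ,
              gammaSharp m γ p.1 p.2 * biasFourier σ p.2
                * Complex.exp (Complex.I * p.2 * ⟪p.1, x⟫) := by
  -- bound for σ
  obtain ⟨M, hM0, hM⟩ := σ.decay 0 0
  have hσ : ∀ s : ℝ, ‖σ s‖ ≤ M := by
    intro s; simpa [norm_iteratedFDeriv_zero] using hM s
  have hinner : Continuous fun a : EuclideanSpace ℝ (Fin m) => (⟪a, x⟫ : ℝ) :=
    continuous_id.inner continuous_const
  -- first integrability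
  have hI1 : Integrable (fun p : EuclideanSpace ℝ (Fin m) × ℝ => γ p * σ (⟪p.1, x⟫ - p.2)) := by
    apply (γ.integrable.norm.const_mul M).mono'
    · apply Continuous.aestronglyMeasurable
      exact γ.continuous.mul (σ.continuous.comp ((hinner.comp continuous_fst).sub continuous_snd))
    · filter_upwards with p
      rw [norm_mul]
      calc ‖γ p‖ * ‖σ (⟪p.1, x⟫ - p.2)‖ ≤ ‖γ p‖ * M :=
            mul_le_mul_of_nonneg_left (hσ _) (norm_nonneg _)
        _ = M * ‖γ p‖ := mul_comm _ _
  -- the big kernel on (E × ℝ) × ℝ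
  set H : (EuclideanSpace ℝ (Fin m) × ℝ) × ℝ → ℂ := fun q =>
    γ (q.1.1, q.2) * biasFourier (⇑σ) q.1.2
      * Complex.exp (Complex.I * q.1.2 * (((⟪q.1.1, x⟫ : ℝ) : ℂ) - ((q.2 : ℝ) : ℂ))) with hH
  have hin2 : Continuous fun q : (EuclideanSpace ℝ (Fin m) × ℝ) × ℝ => (⟪q.1.1, x⟫ : ℝ) :=
    hinner.comp (continuous_fst.comp continuous_fst)
  have hHcont : Continuous H := by
    apply Continuous.mul
    · apply Continuous.mul
      · exact γ.continuous.comp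
          ((continuous_fst.comp continuous_fst).prodMk continuous_snd)
      · exact (biasFourier_continuous σ).comp (continuous_snd.comp continuous_fst)
    · apply Complex.continuous_exp.comp
      exact (continuous_const.mul
          (Complex.continuous_ofReal.comp (continuous_snd.comp continuous_fst))).mul
        ((Complex.continuous_ofReal.comp hin2).sub
          (Complex.continuous_ofReal.comp continuous_snd))
  have hHint : Integrable H ((volume : Measure (EuclideanSpace ℝ (Fin m) × ℝ)).prod volume) := by
    rw [MeasureTheory.integrable_prod_iff hHcont.aestronglyMeasurable]
    constructor
    · filter_upwards with p
      apply ((slice_integrable γ p.1).norm.const_mul ‖biasFourier (⇑σ) p.2‖).mono'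
      · apply Continuous.aestronglyMeasurable
        exact (hHcont.comp (Continuous.prodMk_right p))
      · filter_upwards with b
        simp only [hH, norm_mul]
        rw [norm_exp_I_mul _ _ (by simp), mul_one, mul_comm]
    · have heq : (fun p : EuclideanSpace ℝ (Fin m) × ℝ => ∫ b : ℝ, ‖H (p, b)‖)
          = fun p => (∫ b : ℝ, ‖γ (p.1, b)‖) * ‖biasFourier (⇑σ) p.2‖ := by
        funext p
        rw [← MeasureTheory.integral_mul_const]
        congr 1 with b
        simp only [hH, norm_mul]
        rw [norm_exp_I_mul _ _ (by simp), mul_one]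
      rw [heq]
      have hg : Integrable (fun a : EuclideanSpace ℝ (Fin m) => ∫ b : ℝ, ‖γ (a, b)‖) := by
        have h := γ.integrable (μ := volume)
        rw [MeasureTheory.Measure.volume_eq_prod] at h
        exact h.integral_norm_prod_left
      rw [MeasureTheory.Measure.volume_eq_prod]
      exact hg.mul_prod (biasFourier_integrable σ).norm
  -- identify the second integrand as an integral of H
  have hJ : (fun p : EuclideanSpace ℝ (Fin m) × ℝ =>
        gammaSharp m (⇑γ) p.1 p.2 * biasFourier (⇑σ) p.2
          * Complex.exp (Complex.I * p.2 * ((⟪p.1, x⟫ : ℝ) : ℂ)))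
      = fun p => ∫ b : ℝ, H (p, b) := by
    funext p
    exact inner_rewrite γ σ p.1 p.2 ⟪p.1, x⟫
  have hI2 : Integrable (fun p : EuclideanSpace ℝ (Fin m) × ℝ =>
      gammaSharp m (⇑γ) p.1 p.2 * biasFourier (⇑σ) p.2
        * Complex.exp (Complex.I * p.2 * ((⟪p.1, x⟫ : ℝ) : ℂ))) := by
    rw [hJ, MeasureTheory.Measure.volume_eq_prod]
    exact hHint.integral_prod_left
  refine ⟨hI1, hI2, ?_⟩
  have hI1' := hI1
  have hI2' := hI2
  rw [MeasureTheory.Measure.volume_eq_prod] at hI1' hI2' ⊢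
  rw [MeasureTheory.integral_prod _ hI1', MeasureTheory.integral_prod _ hI2']
  have hkey : ∀ a : EuclideanSpace ℝ (Fin m),
      (∫ b : ℝ, γ (a, b) * σ (⟪a, x⟫ - b))
        = (2 * (Real.pi : ℂ))⁻¹ * ∫ ω : ℝ, gammaSharp m (⇑γ) a ω * biasFourier (⇑σ) ω
            * Complex.exp (Complex.I * ω * ((⟪a, x⟫ : ℝ) : ℂ)) :=
    fun a => key γ σ a ⟪a, x⟫
  simp_rw [hkey]
  rw [MeasureTheory.integral_const_mul]
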